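/- Let G be a finite group with subgroups A, B, M satisfying conditions (1)–(4). Then the number of right cosets of A in G is n², the number of right cosets of BM in G is n, and hence the total number n² + n + 1 (adding ∞) matches the point count of a projective plane of order n. -/
import Mathlib


open scoped Pointwise

/-- Under conditions (1)–(4), `A` has `n²` cosets and `BM` has `n` cosets, so the
total point count (adding `∞`) is `n² + n + 1`. -/
theorem stmt15 {G : Type*} [Group G] [Finite G]
    (A B M AM BM : Subgroup G) (n k : ℕ) (hn : 1 < n)
    (hk : k = Nat.card (A ⊓ B : Subgroup G))
    (hA : Nat.card A = n * k) (hB : Nat.card B = n * k) (hM : Nat.card M = n * k)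
    (hG : Nat.card G = n ^ 3 * k)
    (hAM : (AM : Set G) = (A : Set G) * (M : Set G))
    (hBM : (BM : Set G) = (B : Set G) * (M : Set G))
    (hAMcard : Nat.card AM = n ^ 2 * k) (hBMcard : Nat.card BM = n ^ 2 * k)
    (h3 : ∀ g : G, ∃ a ∈ A, ∃ m ∈ M, ∃ b ∈ B, g = a * m * b)
    (h4 : ((A : Set G) * (B : Set G)) ∩ ((B : Set G) * (A : Set G)) =
      (A : Set G) ∪ (B : Set G)) :
    A.index = n ^ 2 ∧ BM.index = n ∧ A.index + BM.index + 1 = n ^ 2 + n + 1 := by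
  have hk0 : 0 < k := hk ▸ Nat.card_pos
  have hn0 : 0 < n := by omega
  have hAi : Nat.card A * A.index = Nat.card G := Subgroup.card_mul_index A
  have hBMi : Nat.card BM * BM.index = Nat.card G := Subgroup.card_mul_index BM
  rw [hA, hG] at hAi
  rw [hBMcard, hG] at hBMi
  have h1 : A.index = n ^ 2 := by
    have : n * k * A.index = n * k * n ^ 2 := by ring_nf; ring_nf at hAi; omega
    exact Nat.eq_of_mul_eq_mul_left (by positivity) this
  have h2 : BM.index = n := by
    have : n ^ 2 * k * BM.index = n ^ 2 * k * n := by ring_nf; ring_nf at hBMi; omega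
    exact Nat.eq_of_mul_eq_mul_left (by positivity) this
  exact ⟨h1, h2, by rw [h1, h2]⟩
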